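/- Let η₁, η₂ > 0 be real numbers. The characteristic polynomial of the 3×3 matrix B = B(η₁, η₂) equals P₃(X) = X³ + (η₁ + η₂ + 3)X² + (2 + η₁ + (5/4)η₂ + (3/4)η₂η₁)X − (1/4)η₂η₁ − (3/4)η₂, and P₃ has exactly one nonnegative real root; this root is positive and simple. (Spectral core of Theorem 3 for N = 3.) -/
import Mathlib


open Polynomial

/-- For `η₁, η₂ > 0`, the characteristic polynomial of the 3×3
residue matrix `B(η₁, η₂)` of the bounded whole-plane LLE (N = 3) equals
`P₃(X) = X³ + (η₁+η₂+3)X² + (2 + η₁ + (5/4)η₂ + (3/4)η₂η₁)X - (1/4)η₂η₁ - (3/4)η₂`,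
and `P₃` has exactly one nonnegative real root; this root is positive and simple. -/
theorem boundedLLE_N3_charpoly_and_root (η₁ η₂ : ℝ) (h₁ : 0 < η₁) (h₂ : 0 < η₂)
    (P : Polynomial ℝ)
    (hP : P = X ^ 3 + C (η₁ + η₂ + 3) * X ^ 2
        + C (2 + η₁ + (5 / 4) * η₂ + (3 / 4) * η₂ * η₁) * X
        + C (-(1 / 4) * η₂ * η₁ - (3 / 4) * η₂)) :
    Matrix.charpoly
        (!![-1, 2, 0;
            (η₁ + 1) / 2, -η₁ - 1, (η₁ + 3) / 2;
            0, η₂ / 2, -η₂ - 1] : Matrix (Fin 3) (Fin 3) ℝ) = P ∧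
    ∃ x : ℝ, 0 < x ∧ P.IsRoot x ∧ P.derivative.eval x ≠ 0 ∧
      ∀ y : ℝ, 0 ≤ y → P.IsRoot y → y = x := by
  have hev : ∀ t : ℝ, P.eval t
      = t ^ 3 + (η₁ + η₂ + 3) * t ^ 2
        + (2 + η₁ + (5 / 4) * η₂ + (3 / 4) * η₂ * η₁) * t
        + (-(1 / 4) * η₂ * η₁ - (3 / 4) * η₂) := by
    intro t; simp [hP]
  have hdev : ∀ t : ℝ, P.derivative.eval t
      = 3 * t ^ 2 + 2 * (η₁ + η₂ + 3) * t
        + (2 + η₁ + (5 / 4) * η₂ + (3 / 4) * η₂ * η₁) := by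
    intro t; simp [hP]; ring
  have hb : (0:ℝ) < 2 + η₁ + (5 / 4) * η₂ + (3 / 4) * η₂ * η₁ := by
    nlinarith [mul_pos h₁ h₂]
  constructor
  · apply Polynomial.funext
    intro u
    rw [Matrix.charpoly, Matrix.det_fin_three, hP]
    simp [Matrix.charmatrix_apply, Matrix.one_apply]
    ring
  · set t : ℝ := 1 + (1 / 4) * η₂ * η₁ + (3 / 4) * η₂ with ht
    have ht0 : 0 < t := by rw [ht]; nlinarith [mul_pos h₁ h₂]
    have hPt : 0 < P.eval t := by
      rw [hev]
      have hbt : (1 + η₁ + (5 / 4) * η₂ + (3 / 4) * η₂ * η₁) * t > 0 := by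
        apply mul_pos _ ht0; nlinarith [mul_pos h₁ h₂]
      nlinarith [mul_pos ht0 ht0, mul_pos (mul_pos ht0 ht0) ht0,
        mul_pos (show (0:ℝ) < η₁ + η₂ + 3 by linarith) (mul_pos ht0 ht0)]
    have hP0 : P.eval 0 < 0 := by
      rw [hev]; nlinarith [mul_pos h₁ h₂]
    have hmono : ∀ a b : ℝ, 0 ≤ a → a < b → P.eval a < P.eval b := by
      intro a b ha hab
      have hb0 : 0 ≤ b := le_trans ha hab.le
      have hd : 0 < b - a := by linarith
      rw [hev, hev]
      nlinarith [mul_nonneg (mul_nonneg ha ha) hd.le, mul_nonneg (mul_nonneg hb0 hb0) hd.le,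
        mul_nonneg (mul_nonneg ha hb0) hd.le, mul_nonneg ha hd.le, mul_nonneg hb0 hd.le,
        mul_pos hb hd, mul_nonneg h₁.le hd.le, mul_nonneg h₂.le hd.le]
    have hcont : ContinuousOn (fun s => P.eval s) (Set.Icc 0 t) :=
      (Polynomial.continuous P).continuousOn
    obtain ⟨x, hx, hxr⟩ := intermediate_value_Icc (le_of_lt ht0) hcont
      ⟨le_of_lt hP0, le_of_lt hPt⟩
    have hx0 : P.eval x = 0 := hxr
    have hxpos : 0 < x := by
      rcases hx.1.lt_or_eq with h | h
      · exact h
      · exact absurd (h ▸ hx0) (ne_of_lt hP0)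
    refine ⟨x, hxpos, hx0, ?_, ?_⟩
    · rw [hdev]
      nlinarith [sq_nonneg x, mul_pos (show (0:ℝ) < 2 * (η₁ + η₂ + 3) by linarith) hxpos]
    · intro y hy hyr
      have hy0 : P.eval y = 0 := hyr
      rcases lt_trichotomy y x with h | h | h
      · have := hmono y x hy h
        rw [hx0, hy0] at this
        exact absurd this (lt_irrefl 0)
      · exact h
      · have := hmono x y hx.1 h
        rw [hx0, hy0] at this
        exact absurd this (lt_irrefl 0)
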